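/- (Independent partitions have independent dit sets) If partitions π and σ of a finite set U are stochastically independent, i.e., |B∩C|·|U| = |B|·|C| for all B ∈ π, C ∈ σ, then |dit(π) ∩ dit(σ)|·|U|² = |dit(π)|·|dit(σ)|; equivalently m(π,σ) = h(π)·h(σ). -/

import Mathlib

open Finset
variable {U : Type*} [DecidableEq U] [Fintype U]

def dit (π : Finpartition (univ : Finset U)) : Finset (U × U) :=
  univ.filter fun p => ∀ B ∈ π.parts, ¬ (p.1 ∈ B ∧ p.2 ∈ B)

def indit (π : Finpartition (univ : Finset U)) : Finset (U × U) :=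
  univ.filter fun p => ∃ B ∈ π.parts, p.1 ∈ B ∧ p.2 ∈ B

lemma dit_eq_compl (π : Finpartition (univ : Finset U)) : dit π = (indit π)ᶜ := by
  ext p
  simp [dit, indit]

lemma indit_eq (π : Finpartition (univ : Finset U)) :
    indit π = π.parts.biUnion fun B => B ×ˢ B := by
  ext p
  simp [indit, Finset.mem_product]

lemma card_indit (π : Finpartition (univ : Finset U)) :
    (indit π).card = ∑ B ∈ π.parts, B.card ^ 2 := by
  rw [indit_eq, Finset.card_biUnion]
  · simp [sq, Finset.card_product]
  · intro x hx y hy hxy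
    have hd : Disjoint x y := π.disjoint hx hy hxy
    show Disjoint (x ×ˢ x) (y ×ˢ y)
    rw [Finset.disjoint_left]
    rintro ⟨a, b⟩ h1 h2
    simp only [Finset.mem_product] at h1 h2
    exact Finset.disjoint_left.1 hd h1.1 h2.1

lemma inter_indit (π σ : Finpartition (univ : Finset U)) :
    indit π ∩ indit σ =
      (π.parts ×ˢ σ.parts).biUnion fun BC => (BC.1 ∩ BC.2) ×ˢ (BC.1 ∩ BC.2) := by
  ext p
  simp only [Finset.mem_inter, indit, Finset.mem_filter, Finset.mem_univ, true_and,
    Finset.mem_biUnion, Finset.mem_product]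
  constructor
  · rintro ⟨⟨B, hB, h1, h2⟩, ⟨C, hC, h3, h4⟩⟩
    exact ⟨(B, C), ⟨hB, hC⟩, ⟨h1, h3⟩, ⟨h2, h4⟩⟩
  · rintro ⟨⟨B, C⟩, ⟨hB, hC⟩, ⟨h1, h3⟩, ⟨h2, h4⟩⟩
    exact ⟨⟨B, hB, h1, h2⟩, ⟨C, hC, h3, h4⟩⟩

lemma card_inter_indit (π σ : Finpartition (univ : Finset U)) :
    (indit π ∩ indit σ).card = ∑ BC ∈ π.parts ×ˢ σ.parts, (BC.1 ∩ BC.2).card ^ 2 := by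
  rw [inter_indit, Finset.card_biUnion]
  · simp [sq, Finset.card_product]
  · rintro ⟨B, C⟩ hBC ⟨B', C'⟩ hBC' hne
    simp only [Finset.mem_coe, Finset.mem_product] at hBC hBC'
    show Disjoint ((B ∩ C) ×ˢ (B ∩ C)) ((B' ∩ C') ×ˢ (B' ∩ C'))
    rw [Finset.disjoint_left]
    rintro ⟨a, b⟩ h1 h2
    simp only [Finset.mem_product, Finset.mem_inter] at h1 h2
    rcases eq_or_ne B B' with h | h
    · rcases eq_or_ne C C' with h' | h'
      · exact hne (by simp [Prod.ext_iff, h, h'])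
      · exact Finset.disjoint_left.1 (σ.disjoint hBC.2 hBC'.2 h') h1.1.2 h2.1.2
    · exact Finset.disjoint_left.1 (π.disjoint hBC.1 hBC'.1 h) h1.1.1 h2.1.1

theorem stmt8 [Nonempty U] (π σ : Finpartition (univ : Finset U))
    (hind : ∀ B ∈ π.parts, ∀ C ∈ σ.parts,
      (B ∩ C).card * Fintype.card U = B.card * C.card) :
    (dit π ∩ dit σ).card * (Fintype.card U) ^ 2 = (dit π).card * (dit σ).card ∧
    ((dit π ∩ dit σ).card : ℝ) / (Fintype.card U : ℝ) ^ 2 =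
      (((dit π).card : ℝ) / (Fintype.card U : ℝ) ^ 2) *
      (((dit σ).card : ℝ) / (Fintype.card U : ℝ) ^ 2) := by
  set n := Fintype.card U with hn
  -- key: c * n^2 = a * b
  have hc : (indit π ∩ indit σ).card * n ^ 2 =
      (indit π).card * (indit σ).card := by
    rw [card_inter_indit, card_indit, card_indit, Finset.sum_mul_sum, Finset.sum_mul,
      ← Finset.sum_product']
    refine Finset.sum_congr rfl ?_
    rintro ⟨B, C⟩ hBC
    simp only [Finset.mem_product] at hBC
    have := hind B hBC.1 C hBC.2
    calc (B ∩ C).card ^ 2 * n ^ 2 = ((B ∩ C).card * n) ^ 2 := by ring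
    _ = (B.card * C.card) ^ 2 := by rw [this]
    _ = B.card ^ 2 * C.card ^ 2 := by ring
  have hcard : Fintype.card (U × U) = n ^ 2 := by simp [sq, hn]
  have h2 : (dit π).card + (indit π).card = n ^ 2 := by
    rw [dit_eq_compl, Finset.card_compl, hcard]
    have := (Finset.card_le_univ (indit π)).trans_eq hcard
    omega
  have h3 : (dit σ).card + (indit σ).card = n ^ 2 := by
    rw [dit_eq_compl, Finset.card_compl, hcard]
    have := (Finset.card_le_univ (indit σ)).trans_eq hcard
    omega
  have h4 : (dit π ∩ dit σ).card + (indit π ∪ indit σ).card = n ^ 2 := by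
    rw [dit_eq_compl π, dit_eq_compl σ, ← Finset.compl_union, Finset.card_compl, hcard]
    have := (Finset.card_le_univ (indit π ∪ indit σ)).trans_eq hcard
    omega
  have h5 : (indit π ∪ indit σ).card + (indit π ∩ indit σ).card =
      (indit π).card + (indit σ).card := Finset.card_union_add_card_inter _ _
  have hnat : (dit π ∩ dit σ).card * n ^ 2 = (dit π).card * (dit σ).card := by
    zify at hc h2 h3 h4 h5 ⊢
    nlinarith [hc, h2, h3, h4, h5]
  refine ⟨hnat, ?_⟩
  have hn0 : (n : ℝ) ≠ 0 := Nat.cast_ne_zero.2 Fintype.card_ne_zero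
  have : ((dit π ∩ dit σ).card : ℝ) * (n : ℝ) ^ 2 = ((dit π).card : ℝ) * ((dit σ).card : ℝ) := by
    exact_mod_cast congrArg (Nat.cast : ℕ → ℝ) hnat
  field_simp
  linear_combination this
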